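/- arXiv:1712.08137 — 3 statements merged into one kernel-verified Lean document; each statement's English description precedes it below -/
import Mathlib

section
/- Let k̄ and l̄ be nonnegative integers. Then the European put values on the full and on the truncated tree satisfy V − V^{TT} ≤ e^{−rτ}·K·(m+1)·( ∑_{k=k̄+1}^{mn} q̃^{(n)}(k) + ∑_{k=l̄+1}^{mn} q̃^{(n)}(k) ). -/
open Finset

open scoped Classical

noncomputable section

namespace HScut

/-- Level of a jump path `s : Fin n → ℤ` at time `t` (sum of the first `t` jumps). -/
def levelAt (n : ℕ) (s : Fin n → ℤ) (t : ℕ) : ℤ :=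
  ∑ i ∈ Finset.univ.filter (fun i : Fin n => (i : ℕ) < t), s i

/-- Jump paths of length `n` with jumps of amplitude at most `m`. -/
def paths (n m : ℕ) : Finset (Fin n → ℤ) :=
  Fintype.piFinset fun _ => Finset.Icc (-(m : ℤ)) (m : ℤ)

/-- Weight `π(s) = ∏ q (s i)` of a jump path. -/
def pathWeight (n : ℕ) (q : ℤ → ℝ) (s : Fin n → ℤ) : ℝ :=
  ∏ i, q (s i)

/-- Modified weight `π̃(s)`, where each `q (±i)` (`i ≠ 0`) is replaced by `max (q i) (q (-i))`
(which equals `w_i / n`). -/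
def modWeight (n : ℕ) (q : ℤ → ℝ) (s : Fin n → ℤ) : ℝ :=
  ∏ i, (if s i = 0 then q 0 else max (q (s i)) (q (-s i)))

/-- `q^{(n)}(k)`: probability of a net balance of `k` cumulative jumps at maturity. -/
def qfull (n m : ℕ) (q : ℤ → ℝ) (k : ℤ) : ℝ :=
  ∑ s ∈ (paths n m).filter (fun s => levelAt n s n = k), pathWeight n q s

/-- `q̃^{(n)}(k)`: enlarged probability of a net balance of `k` cumulative jumps at maturity. -/
def qtilde (n m : ℕ) (q : ℤ → ℝ) (k : ℤ) : ℝ :=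
  ∑ s ∈ (paths n m).filter (fun s => levelAt n s n = k), modWeight n q s

/-- `q^{k̄,(n)}(k)`: probability of a net balance of `k` jumps at maturity while reaching at
some time a net balance higher than `k̄`. -/
def qup (n m : ℕ) (q : ℤ → ℝ) (kbar : ℕ) (k : ℤ) : ℝ :=
  ∑ s ∈ (paths n m).filter
      (fun s => levelAt n s n = k ∧ ∃ t ≤ n, (kbar : ℤ) + 1 ≤ levelAt n s t),
    pathWeight n q s

/-- `q_{l̄}^{(n)}(k)`: probability of a net balance of `k` jumps at maturity while reaching at
some time a net balance lower than `-l̄`. -/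
def qdown (n m : ℕ) (q : ℤ → ℝ) (lbar : ℕ) (k : ℤ) : ℝ :=
  ∑ s ∈ (paths n m).filter
      (fun s => levelAt n s n = k ∧ ∃ t ≤ n, levelAt n s t ≤ -(lbar : ℤ) - 1),
    pathWeight n q s

/-- `q^{cut,(n)}(k)`: probability of reaching level `k` at maturity without ever leaving the
band `[-l̄, k̄]`. -/
def qcut (n m : ℕ) (q : ℤ → ℝ) (kbar lbar : ℕ) (k : ℤ) : ℝ :=
  ∑ s ∈ (paths n m).filter
      (fun s => levelAt n s n = k ∧
        ∀ t ≤ n, -(lbar : ℤ) ≤ levelAt n s t ∧ levelAt n s t ≤ (kbar : ℤ)),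
    pathWeight n q s

/-- `P(j) = C(n,j) p^j (1-p)^(n-j)`. -/
def binomP (n : ℕ) (p : ℝ) (j : ℕ) : ℝ :=
  (n.choose j : ℝ) * p ^ j * (1 - p) ^ (n - j)

/-- Put payoff at the terminal node `(n, j, k)`. -/
def putPayoff (n : ℕ) (S0 K σ dt h : ℝ) (j : ℕ) (k : ℤ) : ℝ :=
  max (K - S0 * Real.exp ((2 * (j : ℝ) - (n : ℝ)) * (σ * Real.sqrt dt) + h * (k : ℝ))) 0

/-- European put value `V` on the full tree. -/
def Vput (n m : ℕ) (q : ℤ → ℝ) (p S0 K σ τ h r : ℝ) : ℝ :=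
  Real.exp (-(r * τ)) *
    ∑ k ∈ Finset.Icc (-((m : ℤ) * n)) ((m : ℤ) * n), ∑ j ∈ Finset.range (n + 1),
      putPayoff n S0 K σ (τ / n) h j k * binomP n p j * qfull n m q k

/-- European put value `V^{TT}` on the truncated tree. -/
def VTT (n m : ℕ) (q : ℤ → ℝ) (p S0 K σ τ h r : ℝ) (kbar lbar : ℕ) : ℝ :=
  Real.exp (-(r * τ)) *
    ∑ k ∈ Finset.Icc (-(lbar : ℤ)) (kbar : ℤ), ∑ j ∈ Finset.range (n + 1),
      putPayoff n S0 K σ (τ / n) h j k * binomP n p j * qcut n m q kbar lbar k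

/-- The sequence `W_i`: `W₁ = w₁`, `W_{i+1} = w_{i+1} + W_i^{(i+1)/i}` (real powers). -/
def Wseq (w : ℕ → ℝ) : ℕ → ℝ
  | 0 => 0
  | 1 => w 1
  | (i + 2) => w (i + 2) + Wseq w (i + 1) ^ (((i : ℝ) + 2) / ((i : ℝ) + 1))

/-- `M_i = max { W_i, W_i^{(1-i)/i} }` (real powers). -/
def Mseq (w : ℕ → ℝ) (i : ℕ) : ℝ :=
  max (Wseq w i) (Wseq w i ^ ((1 - (i : ℝ)) / (i : ℝ)))

/-- `G = 2 m max{W_m, 1} e^{W_m} ∏_{i=1}^{m-1} M_i²`. -/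
def Gconst (w : ℕ → ℝ) (m : ℕ) : ℝ :=
  2 * m * max (Wseq w m) 1 * Real.exp (Wseq w m) * ∏ i ∈ Finset.Icc 1 (m - 1), (Mseq w i) ^ 2

/-- Value of the underlying at a node with (real) time index `i`, `j` up Brownian moves and
net jump level `l`. -/
def Sval (S0 σ dt h : ℝ) (i : ℝ) (j : ℕ) (l : ℤ) : ℝ :=
  S0 * Real.exp ((2 * (j : ℝ) - i) * (σ * Real.sqrt dt) + (l : ℝ) * h)

/-- Full backward European put price; `VEfull … d j l` is the value `V_E(n-d, j, l)`
(`d` = number of remaining steps). -/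
def VEfull (n m : ℕ) (q : ℤ → ℝ) (p dt S0 K σ h r : ℝ) : ℕ → ℕ → ℤ → ℝ
  | 0, j, l => max (K - Sval S0 σ dt h (n : ℝ) j l) 0
  | (d + 1), j, l =>
      Real.exp (-(r * dt)) *
        ∑ k ∈ Finset.Icc (-(m : ℤ)) (m : ℤ),
          (VEfull n m q p dt S0 K σ h r d (j + 1) (l + k) * p +
            VEfull n m q p dt S0 K σ h r d j (l + k) * (1 - p)) * q k

/-- Full backward American put price; `VAfull … d j l` is the value `V_A(n-d, j, l)`. -/
def VAfull (n m : ℕ) (q : ℤ → ℝ) (p dt S0 K σ h r : ℝ) : ℕ → ℕ → ℤ → ℝ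
  | 0, j, l => max (K - Sval S0 σ dt h (n : ℝ) j l) 0
  | (d + 1), j, l =>
      max
        (Real.exp (-(r * dt)) *
          ∑ k ∈ Finset.Icc (-(m : ℤ)) (m : ℤ),
            (VAfull n m q p dt S0 K σ h r d (j + 1) (l + k) * p +
              VAfull n m q p dt S0 K σ h r d j (l + k) * (1 - p)) * q k)
        (K - Sval S0 σ dt h ((n : ℝ) - (d + 1)) j l)

/-- Truncated backward European put price with boundary value `b`;
`VEtr … d j l` is the value `V_E^b(n-d, j, l)`. -/
def VEtr (n m : ℕ) (q : ℤ → ℝ) (p dt S0 K σ h r b : ℝ) (kbar lbar : ℕ) :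
    ℕ → ℕ → ℤ → ℝ
  | 0, j, l =>
      if -(lbar : ℤ) ≤ l ∧ l ≤ (kbar : ℤ) then max (K - Sval S0 σ dt h (n : ℝ) j l) 0 else b
  | (d + 1), j, l =>
      if -(lbar : ℤ) ≤ l ∧ l ≤ (kbar : ℤ) then
        Real.exp (-(r * dt)) *
          ∑ k ∈ Finset.Icc (-(m : ℤ)) (m : ℤ),
            (VEtr n m q p dt S0 K σ h r b kbar lbar d (j + 1) (l + k) * p +
              VEtr n m q p dt S0 K σ h r b kbar lbar d j (l + k) * (1 - p)) * q k
      else b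

/-- Truncated backward American put price with boundary value `b`;
`VAtr … d j l` is the value `V_A^b(n-d, j, l)`. -/
def VAtr (n m : ℕ) (q : ℤ → ℝ) (p dt S0 K σ h r b : ℝ) (kbar lbar : ℕ) :
    ℕ → ℕ → ℤ → ℝ
  | 0, j, l =>
      if -(lbar : ℤ) ≤ l ∧ l ≤ (kbar : ℤ) then max (K - Sval S0 σ dt h (n : ℝ) j l) 0 else b
  | (d + 1), j, l =>
      if -(lbar : ℤ) ≤ l ∧ l ≤ (kbar : ℤ) then
        max
          (Real.exp (-(r * dt)) *
            ∑ k ∈ Finset.Icc (-(m : ℤ)) (m : ℤ),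
              (VAtr n m q p dt S0 K σ h r b kbar lbar d (j + 1) (l + k) * p +
                VAtr n m q p dt S0 K σ h r b kbar lbar d j (l + k) * (1 - p)) * q k)
          (K - Sval S0 σ dt h ((n : ℝ) - (d + 1)) j l)
      else b

/-- The sum, over all jump-path prefixes that first exit the band `[-l̄, k̄]` at some time
`1 ≤ i ≤ n`, of the prefix probability times `b e^{-r i Δt}`. -/
def exitSum (n m : ℕ) (q : ℤ → ℝ) (r dt : ℝ) (kbar lbar : ℕ) (b : ℝ) : ℝ :=
  ∑ i ∈ Finset.Icc 1 n,
    ∑ y ∈ (paths i m).filter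
        (fun y =>
          (∀ t < i, -(lbar : ℤ) ≤ levelAt i y t ∧ levelAt i y t ≤ (kbar : ℤ)) ∧
          ¬(-(lbar : ℤ) ≤ levelAt i y i ∧ levelAt i y i ≤ (kbar : ℤ))),
      pathWeight i q y * (b * Real.exp (-(r * (i : ℝ) * dt)))

-- aux

lemma level_split (n : ℕ) (s : Fin n → ℤ) {u t : ℕ} (h : u ≤ t) :
    levelAt n s t = levelAt n s u +
      ∑ i ∈ Finset.univ.filter (fun i : Fin n => u ≤ (i : ℕ) ∧ (i : ℕ) < t), s i := by
  rw [levelAt, ← Finset.sum_filter_add_sum_filter_not _ (fun i : Fin n => (i : ℕ) < u)]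
  rw [Finset.filter_filter, Finset.filter_filter, levelAt]
  congr 1
  · apply Finset.sum_congr _ (fun _ _ => rfl)
    apply Finset.filter_congr
    intro i _
    constructor
    · exact fun hi => hi.2
    · exact fun hi => ⟨lt_of_lt_of_le hi h, hi⟩
  · apply Finset.sum_congr _ (fun _ _ => rfl)
    apply Finset.filter_congr
    intro i _
    simp only [not_lt]
    tauto

lemma level_bounds (n m : ℕ) {s : Fin n → ℤ} (hs : s ∈ paths n m) (t : ℕ) :
    -((m : ℤ) * n) ≤ levelAt n s t ∧ levelAt n s t ≤ (m : ℤ) * n := by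
  have hmem : ∀ i : Fin n, -(m : ℤ) ≤ s i ∧ s i ≤ (m : ℤ) := by
    intro i
    exact Finset.mem_Icc.mp ((Fintype.mem_piFinset.mp hs) i)
  set F := Finset.univ.filter (fun i : Fin n => (i : ℕ) < t) with hF
  have hcard : (F.card : ℤ) ≤ (n : ℤ) := by
    exact_mod_cast le_trans (Finset.card_filter_le _ _) (by simp)
  have hm0 : (0 : ℤ) ≤ (m : ℤ) := Int.ofNat_nonneg m
  constructor
  · have h1 : ∑ i ∈ F, (-(m : ℤ)) ≤ ∑ i ∈ F, s i :=
      Finset.sum_le_sum (fun i _ => (hmem i).1)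
    have h2 : -((m : ℤ) * n) ≤ ∑ i ∈ F, (-(m : ℤ)) := by
      rw [Finset.sum_const, nsmul_eq_mul]
      nlinarith
    exact le_trans h2 h1
  · have h1 : ∑ i ∈ F, s i ≤ ∑ i ∈ F, (m : ℤ) :=
      Finset.sum_le_sum (fun i _ => (hmem i).2)
    have h2 : ∑ i ∈ F, (m : ℤ) ≤ (m : ℤ) * n := by
      rw [Finset.sum_const, nsmul_eq_mul]
      nlinarith
    exact le_trans h1 h2

def reflAt (n : ℕ) (τ : ℕ) (s : Fin n → ℤ) : Fin n → ℤ :=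
  fun i => if (i : ℕ) < τ then s i else -s i

lemma reflAt_reflAt (n τ : ℕ) (s : Fin n → ℤ) : reflAt n τ (reflAt n τ s) = s := by
  funext i; unfold reflAt; split <;> simp

lemma reflAt_mem_paths (n m τ : ℕ) {s} (hs : s ∈ paths n m) : reflAt n τ s ∈ paths n m := by
  rw [paths, Fintype.mem_piFinset] at *
  intro i
  have := Finset.mem_Icc.mp (hs i)
  rw [Finset.mem_Icc]
  unfold reflAt; split <;> omega

lemma modFactor_neg (q : ℤ → ℝ) (x : ℤ) :
    (if -x = 0 then q 0 else max (q (-x)) (q (-(-x)))) =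
    (if x = 0 then q 0 else max (q x) (q (-x))) := by
  by_cases h : x = 0 <;> simp [h, neg_neg, max_comm]

lemma modWeight_reflAt (n τ : ℕ) (q : ℤ → ℝ) (s : Fin n → ℤ) :
    modWeight n q (reflAt n τ s) = modWeight n q s := by
  unfold modWeight
  apply Finset.prod_congr rfl
  intro i _
  unfold reflAt
  split
  · rfl
  · exact modFactor_neg q (s i)

lemma modWeight_neg (n : ℕ) (q : ℤ → ℝ) (s : Fin n → ℤ) :
    modWeight n q (fun i => -s i) = modWeight n q s := by
  unfold modWeight
  exact Finset.prod_congr rfl (fun i _ => modFactor_neg q (s i))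

lemma levelAt_neg (n : ℕ) (s : Fin n → ℤ) (t : ℕ) :
    levelAt n (fun i => -s i) t = -levelAt n s t := by
  unfold levelAt; rw [← Finset.sum_neg_distrib]

lemma neg_mem_paths (n m : ℕ) {s} (hs : s ∈ paths n m) : (fun i => -s i) ∈ paths n m := by
  rw [paths, Fintype.mem_piFinset] at *
  intro i
  have := Finset.mem_Icc.mp (hs i)
  rw [Finset.mem_Icc]; omega

lemma levelAt_reflAt_of_le (n τ : ℕ) (s : Fin n → ℤ) {t : ℕ} (h : t ≤ τ) :
    levelAt n (reflAt n τ s) t = levelAt n s t := by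
  unfold levelAt
  apply Finset.sum_congr rfl
  intro i hi
  simp only [Finset.mem_filter] at hi
  simp [reflAt, lt_of_lt_of_le hi.2 h]

lemma levelAt_reflAt_of_ge (n τ : ℕ) (s : Fin n → ℤ) {t : ℕ} (h : τ ≤ t) :
    levelAt n (reflAt n τ s) t = 2 * levelAt n s τ - levelAt n s t := by
  rw [level_split n (reflAt n τ s) h, level_split n s h,
    levelAt_reflAt_of_le n τ s (le_refl τ)]
  have he : ∑ i ∈ Finset.univ.filter (fun i : Fin n => τ ≤ (i:ℕ) ∧ (i:ℕ) < t), reflAt n τ s i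
       = -∑ i ∈ Finset.univ.filter (fun i : Fin n => τ ≤ (i:ℕ) ∧ (i:ℕ) < t), s i := by
    rw [← Finset.sum_neg_distrib]
    apply Finset.sum_congr rfl
    intro i hi
    simp only [Finset.mem_filter] at hi
    simp [reflAt, not_lt.mpr hi.2.1]
  rw [he]; ring

def hitTime (n : ℕ) (c : ℤ) (s : Fin n → ℤ) : ℕ := sInf {t | c ≤ levelAt n s t}

def reflect (n : ℕ) (c : ℤ) (s : Fin n → ℤ) : Fin n → ℤ := reflAt n (hitTime n c s) s

lemma hitTime_spec (n : ℕ) (c : ℤ) (s : Fin n → ℤ) (hs : ∃ t, c ≤ levelAt n s t) :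
    c ≤ levelAt n s (hitTime n c s) := Nat.sInf_mem hs

lemma hitTime_le (n : ℕ) (c : ℤ) (s : Fin n → ℤ) {t : ℕ} (h : c ≤ levelAt n s t) :
    hitTime n c s ≤ t := Nat.sInf_le h

lemma hitTime_reflect (n : ℕ) (c : ℤ) (s : Fin n → ℤ) (hs : ∃ t, c ≤ levelAt n s t) :
    hitTime n c (reflect n c s) = hitTime n c s := by
  set τ := hitTime n c s with hτ
  have hspec : c ≤ levelAt n (reflect n c s) τ := by
    rw [reflect, levelAt_reflAt_of_le n τ s (le_refl τ)]
    exact hitTime_spec n c s hs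
  apply le_antisymm
  · exact Nat.sInf_le hspec
  · by_contra hcon
    push_neg at hcon
    have hmem : c ≤ levelAt n (reflect n c s) (hitTime n c (reflect n c s)) :=
      hitTime_spec n c (reflect n c s) ⟨τ, hspec⟩
    have hmem2 : c ≤ levelAt n s (hitTime n c (reflect n c s)) := by
      rw [← levelAt_reflAt_of_le n τ s (le_of_lt hcon)]
      exact hmem
    exact Nat.notMem_of_lt_sInf hcon hmem2

lemma reflect_reflect (n : ℕ) (c : ℤ) (s : Fin n → ℤ) (hs : ∃ t, c ≤ levelAt n s t) :
    reflect n c (reflect n c s) = s := by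
  rw [reflect, hitTime_reflect n c s hs, reflect, reflAt_reflAt]

lemma modWeight_nonneg (n m : ℕ) (q : ℤ → ℝ)
    (hq : ∀ l : ℤ, -(m : ℤ) ≤ l → l ≤ (m : ℤ) → 0 ≤ q l) {s} (hs : s ∈ paths n m) :
    0 ≤ modWeight n q s := by
  apply Finset.prod_nonneg
  intro i _
  have h := Finset.mem_Icc.mp ((Fintype.mem_piFinset.mp hs) i)
  split
  · exact hq 0 (by omega) (by omega)
  · exact le_trans (hq (s i) h.1 h.2) (le_max_left _ _)

lemma pathWeight_nonneg (n m : ℕ) (q : ℤ → ℝ)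
    (hq : ∀ l : ℤ, -(m : ℤ) ≤ l → l ≤ (m : ℤ) → 0 ≤ q l) {s} (hs : s ∈ paths n m) :
    0 ≤ pathWeight n q s := by
  apply Finset.prod_nonneg
  intro i _
  have h := Finset.mem_Icc.mp ((Fintype.mem_piFinset.mp hs) i)
  exact hq (s i) h.1 h.2

lemma pathWeight_le_modWeight (n m : ℕ) (q : ℤ → ℝ)
    (hq : ∀ l : ℤ, -(m : ℤ) ≤ l → l ≤ (m : ℤ) → 0 ≤ q l) {s} (hs : s ∈ paths n m) :
    pathWeight n q s ≤ modWeight n q s := by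
  apply Finset.prod_le_prod
  · intro i _
    have h := Finset.mem_Icc.mp ((Fintype.mem_piFinset.mp hs) i)
    exact hq (s i) h.1 h.2
  · intro i _
    split
    · next h0 => rw [h0]
    · exact le_max_left _ _

lemma upcross_bound (n m : ℕ) (q : ℤ → ℝ)
    (hq : ∀ l : ℤ, -(m : ℤ) ≤ l → l ≤ (m : ℤ) → 0 ≤ q l) (c : ℤ) :
    ∑ s ∈ (paths n m).filter (fun s => ∃ t ≤ n, c ≤ levelAt n s t), modWeight n q s ≤
      2 * ∑ s ∈ (paths n m).filter (fun s => c ≤ levelAt n s n), modWeight n q s := by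
  set A := (paths n m).filter (fun s => ∃ t ≤ n, c ≤ levelAt n s t) with hA
  set B := (paths n m).filter (fun s => c ≤ levelAt n s n) with hB
  have hBA : B ⊆ A := by
    intro s hs
    rw [hB, Finset.mem_filter] at hs
    rw [hA, Finset.mem_filter]
    exact ⟨hs.1, n, le_rfl, hs.2⟩
  -- facts about elements of A \ B
  have hfacts : ∀ s ∈ A \ B, reflect n c s ∈ B ∧ reflect n c (reflect n c s) = s := by
    intro s hs
    rw [Finset.mem_sdiff, hA, hB, Finset.mem_filter, Finset.mem_filter] at hs
    obtain ⟨⟨hsp, t, htn, hct⟩, hnb⟩ := hs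
    have hex : ∃ t, c ≤ levelAt n s t := ⟨t, hct⟩
    have hτn : hitTime n c s ≤ n := hitTime_le n c s hct |>.trans htn
    have hLn : levelAt n s n < c := by
      by_contra hcon
      push_neg at hcon
      exact hnb ⟨hsp, hcon⟩
    refine ⟨?_, reflect_reflect n c s hex⟩
    rw [hB, Finset.mem_filter]
    constructor
    · exact reflAt_mem_paths n m _ hsp
    · rw [reflect, levelAt_reflAt_of_ge n _ s hτn]
      have := hitTime_spec n c s hex
      omega
  have hinj : ∀ x ∈ A \ B, ∀ y ∈ A \ B, reflect n c x = reflect n c y → x = y := by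
    intro x hx y hy hxy
    rw [← (hfacts x hx).2, ← (hfacts y hy).2, hxy]
  have himg : ∑ s ∈ (A \ B).image (reflect n c), modWeight n q s
      = ∑ s ∈ A \ B, modWeight n q s := by
    rw [Finset.sum_image hinj]
    exact Finset.sum_congr rfl (fun s _ => modWeight_reflAt n _ q s)
  have hsub : (A \ B).image (reflect n c) ⊆ B := by
    intro u hu
    rw [Finset.mem_image] at hu
    obtain ⟨s, hs, rfl⟩ := hu
    exact (hfacts s hs).1
  have hle : ∑ s ∈ A \ B, modWeight n q s ≤ ∑ s ∈ B, modWeight n q s := by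
    rw [← himg]
    apply Finset.sum_le_sum_of_subset_of_nonneg hsub
    intro s hsB _
    rw [hB, Finset.mem_filter] at hsB
    exact modWeight_nonneg n m q hq hsB.1
  have hsd : ∑ s ∈ A \ B, modWeight n q s + ∑ s ∈ B, modWeight n q s
      = ∑ s ∈ A, modWeight n q s := Finset.sum_sdiff hBA
  linarith

lemma downcross_eq (n m : ℕ) (q : ℤ → ℝ) (c : ℤ) :
    ∑ s ∈ (paths n m).filter (fun s => ∃ t ≤ n, levelAt n s t ≤ -c), modWeight n q s
      = ∑ s ∈ (paths n m).filter (fun s => ∃ t ≤ n, c ≤ levelAt n s t), modWeight n q s := by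
  apply Finset.sum_nbij' (i := fun s => fun j => -s j) (j := fun s => fun j => -s j)
  · intro s hs
    rw [Finset.mem_filter] at hs ⊢
    obtain ⟨hsp, t, htn, hle⟩ := hs
    refine ⟨neg_mem_paths n m hsp, t, htn, ?_⟩
    rw [levelAt_neg]; omega
  · intro s hs
    rw [Finset.mem_filter] at hs ⊢
    obtain ⟨hsp, t, htn, hle⟩ := hs
    refine ⟨neg_mem_paths n m hsp, t, htn, ?_⟩
    rw [levelAt_neg]; omega
  · intro s _; funext i; simp
  · intro s _; funext i; simp
  · intro s _
    exact (modWeight_neg n q s).symm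

lemma tail_eq (n m : ℕ) (q : ℤ → ℝ) (c : ℕ) :
    ∑ k ∈ Finset.Icc (c + 1) (m * n), qtilde n m q (k : ℤ)
      = ∑ s ∈ (paths n m).filter (fun s => (c : ℤ) + 1 ≤ levelAt n s n),
          modWeight n q s := by
  rw [← Finset.sum_fiberwise_of_maps_to
    (g := fun s => (levelAt n s n).toNat) (t := Finset.Icc (c + 1) (m * n))
    (f := modWeight n q) ?hmaps]
  case hmaps =>
    intro s hs
    rw [Finset.mem_filter] at hs
    have hub : levelAt n s n ≤ ((m * n : ℕ) : ℤ) := by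
      have := (level_bounds n m hs.1 n).2
      push_cast
      linarith
    have hlb := hs.2
    simp only [Finset.mem_Icc]
    omega
  apply Finset.sum_congr rfl
  intro k hk
  rw [Finset.mem_Icc] at hk
  rw [qtilde]
  congr 1
  rw [Finset.filter_filter]
  apply Finset.filter_congr
  intro s hs
  have hub : levelAt n s n ≤ ((m * n : ℕ) : ℤ) := by
    have := (level_bounds n m hs n).2
    push_cast
    linarith
  constructor
  · intro h; constructor <;> omega
  · intro h; omega

lemma binomP_sum (n : ℕ) (p : ℝ) : ∑ j ∈ Finset.range (n + 1), binomP n p j = 1 := by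
  calc ∑ j ∈ Finset.range (n + 1), binomP n p j
      = ∑ j ∈ Finset.range (n + 1), p ^ j * (1 - p) ^ (n - j) * (n.choose j : ℝ) := by
        apply Finset.sum_congr rfl
        intro j _
        rw [binomP]; ring
    _ = (p + (1 - p)) ^ n := (add_pow p (1 - p) n).symm
    _ = 1 := by norm_num

lemma binomP_nonneg (n : ℕ) {p : ℝ} (hp0 : 0 ≤ p) (hp1 : p ≤ 1) (j : ℕ) :
    0 ≤ binomP n p j := by
  rw [binomP]
  have h1 : (0:ℝ) ≤ 1 - p := by linarith
  positivity

lemma putPayoff_nonneg (n : ℕ) (S0 K σ dt h : ℝ) (j : ℕ) (k : ℤ) :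
    0 ≤ putPayoff n S0 K σ dt h j k := le_max_right _ _

lemma putPayoff_le (n : ℕ) {S0 K : ℝ} (σ dt h : ℝ) (hS0 : 0 < S0) (hK : 0 < K) (j : ℕ) (k : ℤ) :
    putPayoff n S0 K σ dt h j k ≤ K := by
  rw [putPayoff]
  apply max_le _ hK.le
  have := Real.exp_pos ((2 * (j : ℝ) - (n : ℝ)) * (σ * Real.sqrt dt) + h * (k : ℝ))
  nlinarith

lemma sum_fiber_weight (n m : ℕ) (q : ℤ → ℝ) (A : ℤ → ℝ) (P : Finset (Fin n → ℤ))
    (Kset : Finset ℤ) (hmaps : ∀ s ∈ P, levelAt n s n ∈ Kset) :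
    ∑ k ∈ Kset, A k * (∑ s ∈ P.filter (fun s => levelAt n s n = k), pathWeight n q s)
      = ∑ s ∈ P, A (levelAt n s n) * pathWeight n q s := by
  rw [← Finset.sum_fiberwise_of_maps_to (g := fun s => levelAt n s n) hmaps
    (f := fun s => A (levelAt n s n) * pathWeight n q s)]
  apply Finset.sum_congr rfl
  intro k _
  rw [Finset.mul_sum]
  apply Finset.sum_congr rfl
  intro s hs
  rw [Finset.mem_filter] at hs
  rw [hs.2]

lemma qtilde_nonneg (n m : ℕ) (q : ℤ → ℝ)
    (hq : ∀ l : ℤ, -(m : ℤ) ≤ l → l ≤ (m : ℤ) → 0 ≤ q l) (k : ℤ) :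
    0 ≤ qtilde n m q k := by
  apply Finset.sum_nonneg
  intro s hs
  rw [Finset.mem_filter] at hs
  exact modWeight_nonneg n m q hq hs.1

end HScut

open HScut

/-- European put truncation bound (general m):
`V − V^{TT} ≤ e^{−rτ} K (m+1) (∑_{k=k̄+1}^{mn} q̃^{(n)}(k) + ∑_{k=l̄+1}^{mn} q̃^{(n)}(k))`. -/
theorem put_truncation_bound_general (n m : ℕ) (hn : 1 ≤ n) (hm : 1 ≤ m) (q : ℤ → ℝ)
    (hq : ∀ l : ℤ, -(m : ℤ) ≤ l → l ≤ (m : ℤ) → 0 ≤ q l)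
    (hsum : ∑ l ∈ Finset.Icc (-(m : ℤ)) (m : ℤ), q l = 1)
    (S0 K σ τ h r p : ℝ) (hS0 : 0 < S0) (hK : 0 < K) (hh : 0 < h) (hτ : 0 < τ)
    (hp0 : 0 ≤ p) (hp1 : p ≤ 1) (kbar lbar : ℕ) :
    Vput n m q p S0 K σ τ h r - VTT n m q p S0 K σ τ h r kbar lbar ≤
      Real.exp (-(r * τ)) * K * ((m : ℝ) + 1) *
        ((∑ k ∈ Finset.Icc (kbar + 1) (m * n), qtilde n m q (k : ℤ)) +
          (∑ k ∈ Finset.Icc (lbar + 1) (m * n), qtilde n m q (k : ℤ))) := by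
  set E := Real.exp (-(r * τ)) with hE
  have hE0 : 0 < E := Real.exp_pos _
  set A : ℤ → ℝ := fun k => ∑ j ∈ Finset.range (n + 1),
    putPayoff n S0 K σ (τ / n) h j k * binomP n p j with hAdef
  -- A is bounded by K
  have hAle : ∀ k : ℤ, A k ≤ K := by
    intro k
    calc A k ≤ ∑ j ∈ Finset.range (n + 1), K * binomP n p j := by
          apply Finset.sum_le_sum
          intro j _
          exact mul_le_mul_of_nonneg_right (putPayoff_le n σ (τ / n) h hS0 hK j k)
            (binomP_nonneg n hp0 hp1 j)
      _ = K := by rw [← Finset.mul_sum, binomP_sum, mul_one]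
  -- band predicate
  set band : (Fin n → ℤ) → Prop := fun s =>
    ∀ t ≤ n, -(lbar : ℤ) ≤ levelAt n s t ∧ levelAt n s t ≤ (kbar : ℤ) with hbanddef
  -- rewrite Vput as a path sum
  have hV : Vput n m q p S0 K σ τ h r
      = E * ∑ s ∈ paths n m, A (levelAt n s n) * pathWeight n q s := by
    rw [Vput, hE]
    congr 1
    rw [← sum_fiber_weight n m q A (paths n m) _ (fun s hs => by
      rw [Finset.mem_Icc]
      exact level_bounds n m hs n)]
    apply Finset.sum_congr rfl
    intro k _
    rw [hAdef, Finset.sum_mul]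
    rfl
  -- rewrite VTT as a path sum over band paths
  have hVTT : VTT n m q p S0 K σ τ h r kbar lbar
      = E * ∑ s ∈ (paths n m).filter band, A (levelAt n s n) * pathWeight n q s := by
    rw [VTT, hE]
    congr 1
    rw [← sum_fiber_weight n m q A ((paths n m).filter band) _ (fun s hs => by
      rw [Finset.mem_filter] at hs
      rw [Finset.mem_Icc]
      exact hs.2 n le_rfl)]
    apply Finset.sum_congr rfl
    intro k _
    rw [hAdef, Finset.sum_mul]
    have hfe : (paths n m).filter (fun s => levelAt n s n = k ∧
          ∀ t ≤ n, -(lbar : ℤ) ≤ levelAt n s t ∧ levelAt n s t ≤ (kbar : ℤ))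
        = ((paths n m).filter band).filter (fun s => levelAt n s n = k) := by
      ext s
      simp only [Finset.mem_filter, hbanddef]
      tauto
    rw [qcut, hfe]
  rw [hV, hVTT, ← mul_sub]
  have hsplit : ∑ s ∈ paths n m, A (levelAt n s n) * pathWeight n q s
      - ∑ s ∈ (paths n m).filter band, A (levelAt n s n) * pathWeight n q s
      = ∑ s ∈ (paths n m).filter (fun s => ¬ band s),
          A (levelAt n s n) * pathWeight n q s := by
    rw [← Finset.sum_filter_add_sum_filter_not (paths n m) band
      (fun s => A (levelAt n s n) * pathWeight n q s)]
    ring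
  rw [hsplit]
  set U := (paths n m).filter (fun s => ∃ t ≤ n, (kbar : ℤ) + 1 ≤ levelAt n s t) with hUdef
  set D := (paths n m).filter
    (fun s => ∃ t ≤ n, levelAt n s t ≤ -((lbar : ℤ) + 1)) with hDdef
  have h1 : ∑ s ∈ (paths n m).filter (fun s => ¬ band s),
        A (levelAt n s n) * pathWeight n q s
      ≤ K * ∑ s ∈ (paths n m).filter (fun s => ¬ band s), modWeight n q s := by
    rw [Finset.mul_sum]
    apply Finset.sum_le_sum
    intro s hs
    rw [Finset.mem_filter] at hs
    have hpw := pathWeight_nonneg n m q hq hs.1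
    have hmw := pathWeight_le_modWeight n m q hq hs.1
    calc A (levelAt n s n) * pathWeight n q s
        ≤ K * pathWeight n q s := mul_le_mul_of_nonneg_right (hAle _) hpw
      _ ≤ K * modWeight n q s := mul_le_mul_of_nonneg_left hmw hK.le
  have hexit : ∑ s ∈ (paths n m).filter (fun s => ¬ band s), modWeight n q s ≤
      (∑ s ∈ U, modWeight n q s) + (∑ s ∈ D, modWeight n q s) := by
    have hsub : (paths n m).filter (fun s => ¬ band s) ⊆ U ∪ D := by
      intro s hs
      rw [Finset.mem_filter, hbanddef] at hs
      obtain ⟨hsp, hnb⟩ := hs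
      have hnb' : ¬ ∀ t ≤ n, -(lbar : ℤ) ≤ levelAt n s t ∧ levelAt n s t ≤ (kbar : ℤ) := hnb
      push_neg at hnb'
      obtain ⟨t, htn, hbad⟩ := hnb' 
      rw [Finset.mem_union]
      by_cases hcase : (kbar : ℤ) + 1 ≤ levelAt n s t
      · left
        rw [hUdef, Finset.mem_filter]
        exact ⟨hsp, t, htn, hcase⟩
      · right
        rw [hDdef, Finset.mem_filter]
        refine ⟨hsp, t, htn, ?_⟩
        omega
    have hUD : ∑ s ∈ U ∪ D, modWeight n q s + ∑ s ∈ U ∩ D, modWeight n q s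
        = ∑ s ∈ U, modWeight n q s + ∑ s ∈ D, modWeight n q s :=
      Finset.sum_union_inter
    have hI : 0 ≤ ∑ s ∈ U ∩ D, modWeight n q s := by
      apply Finset.sum_nonneg
      intro s hs
      rw [Finset.mem_inter, hUdef, Finset.mem_filter] at hs
      exact modWeight_nonneg n m q hq hs.1.1
    have hfs : ∑ s ∈ (paths n m).filter (fun s => ¬ band s), modWeight n q s
        ≤ ∑ s ∈ U ∪ D, modWeight n q s := by
      apply Finset.sum_le_sum_of_subset_of_nonneg hsub
      intro s hsm _
      rcases Finset.mem_union.mp hsm with hsm | hsm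
      · rw [hUdef, Finset.mem_filter] at hsm
        exact modWeight_nonneg n m q hq hsm.1
      · rw [hDdef, Finset.mem_filter] at hsm
        exact modWeight_nonneg n m q hq hsm.1
    linarith
  set Tk := ∑ k ∈ Finset.Icc (kbar + 1) (m * n), qtilde n m q (k : ℤ) with hTk
  set Tl := ∑ k ∈ Finset.Icc (lbar + 1) (m * n), qtilde n m q (k : ℤ) with hTl
  have hU2 : ∑ s ∈ U, modWeight n q s ≤ 2 * Tk := by
    have hb := upcross_bound n m q hq ((kbar : ℤ) + 1)
    have ht := tail_eq n m q kbar
    rw [hTk, ht]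
    exact hb
  have hD2 : ∑ s ∈ D, modWeight n q s ≤ 2 * Tl := by
    have he := downcross_eq n m q ((lbar : ℤ) + 1)
    have hb := upcross_bound n m q hq ((lbar : ℤ) + 1)
    have ht := tail_eq n m q lbar
    rw [hDdef, he, hTl, ht]
    exact hb
  have hTk0 : 0 ≤ Tk :=
    Finset.sum_nonneg (fun k _ => qtilde_nonneg n m q hq _)
  have hTl0 : 0 ≤ Tl :=
    Finset.sum_nonneg (fun k _ => qtilde_nonneg n m q hq _)
  have hm1 : (2 : ℝ) ≤ (m : ℝ) + 1 := by
    have : (1 : ℝ) ≤ (m : ℝ) := by exact_mod_cast hm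
    linarith
  have hfinal : ∑ s ∈ (paths n m).filter (fun s => ¬ band s),
        A (levelAt n s n) * pathWeight n q s
      ≤ K * (((m : ℝ) + 1) * (Tk + Tl)) := by
    have h2 : ∑ s ∈ (paths n m).filter (fun s => ¬ band s), modWeight n q s
        ≤ 2 * Tk + 2 * Tl := by linarith
    have h3 : (2 : ℝ) * Tk + 2 * Tl ≤ ((m : ℝ) + 1) * (Tk + Tl) := by nlinarith
    calc ∑ s ∈ (paths n m).filter (fun s => ¬ band s),
          A (levelAt n s n) * pathWeight n q s
        ≤ K * ∑ s ∈ (paths n m).filter (fun s => ¬ band s), modWeight n q s := h1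
      _ ≤ K * (((m : ℝ) + 1) * (Tk + Tl)) := by
          apply mul_le_mul_of_nonneg_left _ hK.le
          linarith
  calc E * ∑ s ∈ (paths n m).filter (fun s => ¬ band s),
        A (levelAt n s n) * pathWeight n q s
      ≤ E * (K * (((m : ℝ) + 1) * (Tk + Tl))) :=
        mul_le_mul_of_nonneg_left hfinal hE0.le
    _ = E * K * ((m : ℝ) + 1) * (Tk + Tl) := by ring
end
end

section
/- Assume r ≥ 0 and take boundary value b = K in the truncated backward recursions. Then the American and European put prices satisfy |V_A^K(0,0,0) − V_A(0,0,0)| ≤ |V_E^K(0,0,0) − V_E(0,0,0)|. -/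
open Finset

open scoped Classical

noncomputable section

namespace HScut

private lemma Sval_nonneg {S0 σ dt h : ℝ} (hS0 : 0 ≤ S0) (i : ℝ) (j : ℕ) (l : ℤ) :
    0 ≤ Sval S0 σ dt h i j l := mul_nonneg hS0 (Real.exp_pos _).le

private lemma step_mono (m : ℕ) (q : ℤ → ℝ) (p e : ℝ)
    (hq : ∀ l ∈ Finset.Icc (-(m : ℤ)) (m : ℤ), 0 ≤ q l)
    (hp0 : 0 ≤ p) (hp1 : p ≤ 1) (he : 0 ≤ e)
    (a1 a2 b1 b2 : ℤ → ℝ)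
    (h1 : ∀ k ∈ Finset.Icc (-(m : ℤ)) (m : ℤ), a1 k ≤ b1 k)
    (h2 : ∀ k ∈ Finset.Icc (-(m : ℤ)) (m : ℤ), a2 k ≤ b2 k) :
    e * ∑ k ∈ Finset.Icc (-(m : ℤ)) (m : ℤ), (a1 k * p + a2 k * (1 - p)) * q k ≤
      e * ∑ k ∈ Finset.Icc (-(m : ℤ)) (m : ℤ), (b1 k * p + b2 k * (1 - p)) * q k := by
  refine mul_le_mul_of_nonneg_left (Finset.sum_le_sum fun k hk => ?_) he
  have hqk := hq k hk
  nlinarith [mul_nonneg (mul_nonneg (sub_nonneg.2 (h1 k hk)) hp0) hqk,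
    mul_nonneg (mul_nonneg (sub_nonneg.2 (h2 k hk)) (by linarith : (0:ℝ) ≤ 1 - p)) hqk]

private lemma expsum_le_K (m : ℕ) (q : ℤ → ℝ) (p K e : ℝ)
    (hq : ∀ l ∈ Finset.Icc (-(m : ℤ)) (m : ℤ), 0 ≤ q l)
    (hsum : ∑ l ∈ Finset.Icc (-(m : ℤ)) (m : ℤ), q l = 1)
    (hK : 0 ≤ K) (he0 : 0 ≤ e) (he1 : e ≤ 1) (hp0 : 0 ≤ p) (hp1 : p ≤ 1)
    (v1 v2 : ℤ → ℝ)
    (h1 : ∀ k ∈ Finset.Icc (-(m : ℤ)) (m : ℤ), v1 k ≤ K)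
    (h2 : ∀ k ∈ Finset.Icc (-(m : ℤ)) (m : ℤ), v2 k ≤ K) :
    e * ∑ k ∈ Finset.Icc (-(m : ℤ)) (m : ℤ), (v1 k * p + v2 k * (1 - p)) * q k ≤ K := by
  have hs := step_mono m q p e hq hp0 hp1 he0 v1 v2 (fun _ => K) (fun _ => K) h1 h2
  have hKsum : ∑ k ∈ Finset.Icc (-(m : ℤ)) (m : ℤ),
      ((fun _ : ℤ => K) k * p + (fun _ : ℤ => K) k * (1 - p)) * q k = K := by
    rw [Finset.sum_congr rfl (fun k _ => by ring :
      ∀ k ∈ Finset.Icc (-(m : ℤ)) (m : ℤ),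
        ((fun _ : ℤ => K) k * p + (fun _ : ℤ => K) k * (1 - p)) * q k = K * q k),
      ← Finset.mul_sum, hsum, mul_one]
  calc e * ∑ k ∈ Finset.Icc (-(m : ℤ)) (m : ℤ), (v1 k * p + v2 k * (1 - p)) * q k
      ≤ e * K := by rw [← hKsum]; exact hs
    _ ≤ 1 * K := mul_le_mul_of_nonneg_right he1 hK
    _ = K := one_mul K

section Main

variable (n m : ℕ) (q : ℤ → ℝ) (p dt S0 K σ h r : ℝ) (kbar lbar : ℕ)

private lemma VEfull_le_K
    (hq : ∀ l ∈ Finset.Icc (-(m : ℤ)) (m : ℤ), 0 ≤ q l)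
    (hsum : ∑ l ∈ Finset.Icc (-(m : ℤ)) (m : ℤ), q l = 1)
    (hS0 : 0 ≤ S0) (hK : 0 ≤ K) (he1 : Real.exp (-(r * dt)) ≤ 1)
    (hp0 : 0 ≤ p) (hp1 : p ≤ 1) :
    ∀ d j l, VEfull n m q p dt S0 K σ h r d j l ≤ K := by
  intro d
  induction d with
  | zero =>
    intro j l
    simp only [VEfull]
    exact max_le (by linarith [Sval_nonneg (S0 := S0) (σ := σ) (dt := dt) (h := h) hS0 (n : ℝ) j l]) hK
  | succ d ih =>
    intro j l
    simp only [VEfull]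
    exact expsum_le_K m q p K _ hq hsum hK (Real.exp_pos _).le he1 hp0 hp1 _ _
      (fun k _ => ih (j + 1) (l + k)) (fun k _ => ih j (l + k))

private lemma VAfull_le_K
    (hq : ∀ l ∈ Finset.Icc (-(m : ℤ)) (m : ℤ), 0 ≤ q l)
    (hsum : ∑ l ∈ Finset.Icc (-(m : ℤ)) (m : ℤ), q l = 1)
    (hS0 : 0 ≤ S0) (hK : 0 ≤ K) (he1 : Real.exp (-(r * dt)) ≤ 1)
    (hp0 : 0 ≤ p) (hp1 : p ≤ 1) :
    ∀ d j l, VAfull n m q p dt S0 K σ h r d j l ≤ K := by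
  intro d
  induction d with
  | zero =>
    intro j l
    simp only [VAfull]
    exact max_le (by linarith [Sval_nonneg (S0 := S0) (σ := σ) (dt := dt) (h := h) hS0 (n : ℝ) j l]) hK
  | succ d ih =>
    intro j l
    simp only [VAfull]
    refine max_le (expsum_le_K m q p K _ hq hsum hK (Real.exp_pos _).le he1 hp0 hp1 _ _
      (fun k _ => ih (j + 1) (l + k)) (fun k _ => ih j (l + k))) ?_
    linarith [Sval_nonneg (S0 := S0) (σ := σ) (dt := dt) (h := h) hS0 ((n : ℝ) - (d + 1)) j l]

private lemma VEfull_le_VEtr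
    (hq : ∀ l ∈ Finset.Icc (-(m : ℤ)) (m : ℤ), 0 ≤ q l)
    (hsum : ∑ l ∈ Finset.Icc (-(m : ℤ)) (m : ℤ), q l = 1)
    (hS0 : 0 ≤ S0) (hK : 0 ≤ K) (he1 : Real.exp (-(r * dt)) ≤ 1)
    (hp0 : 0 ≤ p) (hp1 : p ≤ 1) :
    ∀ d j l, VEfull n m q p dt S0 K σ h r d j l ≤
      VEtr n m q p dt S0 K σ h r K kbar lbar d j l := by
  intro d
  induction d with
  | zero =>
    intro j l
    simp only [VEtr]
    split_ifs with hband
    · simp only [VEfull]; exact le_rfl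
    · exact VEfull_le_K n m q p dt S0 K σ h r hq hsum hS0 hK he1 hp0 hp1 0 j l
  | succ d ih =>
    intro j l
    simp only [VEtr]
    split_ifs with hband
    · simp only [VEfull]
      exact step_mono m q p _ hq hp0 hp1 (Real.exp_pos _).le _ _ _ _
        (fun k _ => ih (j + 1) (l + k)) (fun k _ => ih j (l + k))
    · exact VEfull_le_K n m q p dt S0 K σ h r hq hsum hS0 hK he1 hp0 hp1 (d + 1) j l

private lemma VAfull_le_VAtr
    (hq : ∀ l ∈ Finset.Icc (-(m : ℤ)) (m : ℤ), 0 ≤ q l)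
    (hsum : ∑ l ∈ Finset.Icc (-(m : ℤ)) (m : ℤ), q l = 1)
    (hS0 : 0 ≤ S0) (hK : 0 ≤ K) (he1 : Real.exp (-(r * dt)) ≤ 1)
    (hp0 : 0 ≤ p) (hp1 : p ≤ 1) :
    ∀ d j l, VAfull n m q p dt S0 K σ h r d j l ≤
      VAtr n m q p dt S0 K σ h r K kbar lbar d j l := by
  intro d
  induction d with
  | zero =>
    intro j l
    simp only [VAtr]
    split_ifs with hband
    · simp only [VAfull]; exact le_rfl
    · exact VAfull_le_K n m q p dt S0 K σ h r hq hsum hS0 hK he1 hp0 hp1 0 j l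
  | succ d ih =>
    intro j l
    simp only [VAtr]
    split_ifs with hband
    · simp only [VAfull]
      exact max_le_max (step_mono m q p _ hq hp0 hp1 (Real.exp_pos _).le _ _ _ _
        (fun k _ => ih (j + 1) (l + k)) (fun k _ => ih j (l + k))) le_rfl
    · exact VAfull_le_K n m q p dt S0 K σ h r hq hsum hS0 hK he1 hp0 hp1 (d + 1) j l

private lemma VEfull_le_VAfull
    (hq : ∀ l ∈ Finset.Icc (-(m : ℤ)) (m : ℤ), 0 ≤ q l)
    (hp0 : 0 ≤ p) (hp1 : p ≤ 1) :
    ∀ d j l, VEfull n m q p dt S0 K σ h r d j l ≤ VAfull n m q p dt S0 K σ h r d j l := by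
  intro d
  induction d with
  | zero => intro j l; simp only [VEfull, VAfull]; exact le_rfl
  | succ d ih =>
    intro j l
    simp only [VEfull, VAfull]
    exact le_trans (step_mono m q p _ hq hp0 hp1 (Real.exp_pos _).le _ _ _ _
      (fun k _ => ih (j + 1) (l + k)) (fun k _ => ih j (l + k))) (le_max_left _ _)

private lemma key_ineq
    (hq : ∀ l ∈ Finset.Icc (-(m : ℤ)) (m : ℤ), 0 ≤ q l)
    (hsum : ∑ l ∈ Finset.Icc (-(m : ℤ)) (m : ℤ), q l = 1)
    (hS0 : 0 ≤ S0) (hK : 0 ≤ K) (he1 : Real.exp (-(r * dt)) ≤ 1)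
    (hp0 : 0 ≤ p) (hp1 : p ≤ 1) :
    ∀ d j l,
      VAtr n m q p dt S0 K σ h r K kbar lbar d j l + VEfull n m q p dt S0 K σ h r d j l ≤
        VEtr n m q p dt S0 K σ h r K kbar lbar d j l + VAfull n m q p dt S0 K σ h r d j l := by
  intro d
  induction d with
  | zero =>
    intro j l
    simp only [VAtr, VEtr, VEfull, VAfull]
    split_ifs with hband <;> exact le_rfl
  | succ d ih =>
    intro j l
    simp only [VAtr, VEtr]
    split_ifs with hband
    · simp only [VEfull, VAfull]
      set e := Real.exp (-(r * dt)) with he_def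
      have he : (0:ℝ) ≤ e := (Real.exp_pos _).le
      have hEf_le_Etr :
          e * ∑ k ∈ Finset.Icc (-(m : ℤ)) (m : ℤ),
              (VEfull n m q p dt S0 K σ h r d (j + 1) (l + k) * p +
                VEfull n m q p dt S0 K σ h r d j (l + k) * (1 - p)) * q k ≤
            e * ∑ k ∈ Finset.Icc (-(m : ℤ)) (m : ℤ),
              (VEtr n m q p dt S0 K σ h r K kbar lbar d (j + 1) (l + k) * p +
                VEtr n m q p dt S0 K σ h r K kbar lbar d j (l + k) * (1 - p)) * q k :=
        step_mono m q p _ hq hp0 hp1 he _ _ _ _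
          (fun k _ => VEfull_le_VEtr n m q p dt S0 K σ h r kbar lbar hq hsum hS0 hK he1 hp0 hp1
            d (j + 1) (l + k))
          (fun k _ => VEfull_le_VEtr n m q p dt S0 K σ h r kbar lbar hq hsum hS0 hK he1 hp0 hp1
            d j (l + k))
      have hcomb :
          e * (∑ k ∈ Finset.Icc (-(m : ℤ)) (m : ℤ),
              (VAtr n m q p dt S0 K σ h r K kbar lbar d (j + 1) (l + k) * p +
                VAtr n m q p dt S0 K σ h r K kbar lbar d j (l + k) * (1 - p)) * q k) +
            e * (∑ k ∈ Finset.Icc (-(m : ℤ)) (m : ℤ),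
              (VEfull n m q p dt S0 K σ h r d (j + 1) (l + k) * p +
                VEfull n m q p dt S0 K σ h r d j (l + k) * (1 - p)) * q k) ≤
          e * (∑ k ∈ Finset.Icc (-(m : ℤ)) (m : ℤ),
              (VEtr n m q p dt S0 K σ h r K kbar lbar d (j + 1) (l + k) * p +
                VEtr n m q p dt S0 K σ h r K kbar lbar d j (l + k) * (1 - p)) * q k) +
            e * (∑ k ∈ Finset.Icc (-(m : ℤ)) (m : ℤ),
              (VAfull n m q p dt S0 K σ h r d (j + 1) (l + k) * p +
                VAfull n m q p dt S0 K σ h r d j (l + k) * (1 - p)) * q k) := by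
        rw [← mul_add, ← mul_add, ← Finset.sum_add_distrib, ← Finset.sum_add_distrib]
        refine mul_le_mul_of_nonneg_left (Finset.sum_le_sum fun k hk => ?_) he
        have hqk := hq k hk
        have i1 := ih (j + 1) (l + k)
        have i2 := ih j (l + k)
        nlinarith [mul_nonneg (mul_nonneg (sub_nonneg.2 i1) hp0) hqk,
          mul_nonneg (mul_nonneg (sub_nonneg.2 i2) (by linarith : (0:ℝ) ≤ 1 - p)) hqk]
      have hAle := le_max_left
        (e * ∑ k ∈ Finset.Icc (-(m : ℤ)) (m : ℤ),
          (VAfull n m q p dt S0 K σ h r d (j + 1) (l + k) * p +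
            VAfull n m q p dt S0 K σ h r d j (l + k) * (1 - p)) * q k)
        (K - Sval S0 σ dt h ((n : ℝ) - (d + 1)) j l)
      have hBle := le_max_right
        (e * ∑ k ∈ Finset.Icc (-(m : ℤ)) (m : ℤ),
          (VAfull n m q p dt S0 K σ h r d (j + 1) (l + k) * p +
            VAfull n m q p dt S0 K σ h r d j (l + k) * (1 - p)) * q k)
        (K - Sval S0 σ dt h ((n : ℝ) - (d + 1)) j l)
      have hmax := max_le
        (show e * ∑ k ∈ Finset.Icc (-(m : ℤ)) (m : ℤ),
            (VAtr n m q p dt S0 K σ h r K kbar lbar d (j + 1) (l + k) * p +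
              VAtr n m q p dt S0 K σ h r K kbar lbar d j (l + k) * (1 - p)) * q k ≤
          (e * ∑ k ∈ Finset.Icc (-(m : ℤ)) (m : ℤ),
            (VEtr n m q p dt S0 K σ h r K kbar lbar d (j + 1) (l + k) * p +
              VEtr n m q p dt S0 K σ h r K kbar lbar d j (l + k) * (1 - p)) * q k +
            max (e * ∑ k ∈ Finset.Icc (-(m : ℤ)) (m : ℤ),
              (VAfull n m q p dt S0 K σ h r d (j + 1) (l + k) * p +
                VAfull n m q p dt S0 K σ h r d j (l + k) * (1 - p)) * q k)
              (K - Sval S0 σ dt h ((n : ℝ) - (d + 1)) j l)) -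
            e * ∑ k ∈ Finset.Icc (-(m : ℤ)) (m : ℤ),
              (VEfull n m q p dt S0 K σ h r d (j + 1) (l + k) * p +
                VEfull n m q p dt S0 K σ h r d j (l + k) * (1 - p)) * q k
          by linarith)
        (show K - Sval S0 σ dt h ((n : ℝ) - (d + 1)) j l ≤
          (e * ∑ k ∈ Finset.Icc (-(m : ℤ)) (m : ℤ),
            (VEtr n m q p dt S0 K σ h r K kbar lbar d (j + 1) (l + k) * p +
              VEtr n m q p dt S0 K σ h r K kbar lbar d j (l + k) * (1 - p)) * q k +
            max (e * ∑ k ∈ Finset.Icc (-(m : ℤ)) (m : ℤ),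
              (VAfull n m q p dt S0 K σ h r d (j + 1) (l + k) * p +
                VAfull n m q p dt S0 K σ h r d j (l + k) * (1 - p)) * q k)
              (K - Sval S0 σ dt h ((n : ℝ) - (d + 1)) j l)) -
            e * ∑ k ∈ Finset.Icc (-(m : ℤ)) (m : ℤ),
              (VEfull n m q p dt S0 K σ h r d (j + 1) (l + k) * p +
                VEfull n m q p dt S0 K σ h r d j (l + k) * (1 - p)) * q k
          by linarith)
      linarith
    · exact add_le_add_right
        (VEfull_le_VAfull n m q p dt S0 K σ h r hq hp0 hp1 (d + 1) j l) K

end Main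

end HScut

open HScut

/-- Theorem: with boundary value `b = K` and `r ≥ 0`, the truncated American and European
put prices satisfy `|V_A^K(0,0,0) − V_A(0,0,0)| ≤ |V_E^K(0,0,0) − V_E(0,0,0)|`. -/
theorem american_error_le_european_error (n m : ℕ) (hn : 1 ≤ n) (hm : 1 ≤ m) (q : ℤ → ℝ)
    (hq : ∀ l : ℤ, -(m : ℤ) ≤ l → l ≤ (m : ℤ) → 0 ≤ q l)
    (hsum : ∑ l ∈ Finset.Icc (-(m : ℤ)) (m : ℤ), q l = 1)
    (S0 K σ τ h r p : ℝ) (hS0 : 0 < S0) (hK : 0 < K) (hh : 0 < h) (hτ : 0 < τ)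
    (hr : 0 ≤ r) (hp0 : 0 ≤ p) (hp1 : p ≤ 1) (kbar lbar : ℕ) :
    |VAtr n m q p (τ / n) S0 K σ h r K kbar lbar n 0 0 -
        VAfull n m q p (τ / n) S0 K σ h r n 0 0| ≤
      |VEtr n m q p (τ / n) S0 K σ h r K kbar lbar n 0 0 -
        VEfull n m q p (τ / n) S0 K σ h r n 0 0| := by
  
  have hq' : ∀ l ∈ Finset.Icc (-(m : ℤ)) (m : ℤ), 0 ≤ q l := fun l hl =>
    hq l (Finset.mem_Icc.1 hl).1 (Finset.mem_Icc.1 hl).2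
  have hdt : 0 ≤ τ / n := div_nonneg hτ.le (Nat.cast_nonneg n)
  have he1 : Real.exp (-(r * (τ / n))) ≤ 1 :=
    Real.exp_le_one_iff.2 (neg_nonpos.2 (mul_nonneg hr hdt))
  have hAt := VAfull_le_VAtr n m q p (τ / n) S0 K σ h r kbar lbar hq' hsum hS0.le hK.le he1
    hp0 hp1 n 0 0
  have hEt := VEfull_le_VEtr n m q p (τ / n) S0 K σ h r kbar lbar hq' hsum hS0.le hK.le he1
    hp0 hp1 n 0 0
  have hkey := key_ineq n m q p (τ / n) S0 K σ h r kbar lbar hq' hsum hS0.le hK.le he1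
    hp0 hp1 n 0 0
  rw [abs_of_nonneg (sub_nonneg.2 hAt), abs_of_nonneg (sub_nonneg.2 hEt)]
  linarith
end
end

section
/- For every b ≥ 0, the truncated backward European put price with boundary value b satisfies V_E^b(0,0,0) = V̂^b, i.e. it equals V^{TT} plus the sum, over all jump-path prefixes that first exit the band [−l̄, k̄] at some time i with 1 ≤ i ≤ n, of the prefix probability times b·e^{−r·i·Δt}. -/
open Finset

open scoped Classical

noncomputable section

open HScut

namespace HSAux

open HScut

lemma sum_Icc_one (f : ℕ → ℝ) (N : ℕ) :
    ∑ i ∈ Finset.Icc 1 N, f i = ∑ i ∈ Finset.range N, f (i+1) := by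
  rw [← Finset.Ico_add_one_right_eq_Icc, Finset.sum_Ico_eq_sum_range]
  simp [add_comm 1]

lemma levelAt_ite (n : ℕ) (s : Fin n → ℤ) (t : ℕ) :
    levelAt n s t = ∑ i : Fin n, if (i : ℕ) < t then s i else 0 := by
  rw [levelAt, Finset.sum_filter]

lemma levelAt_zero (n : ℕ) (s : Fin n → ℤ) : levelAt n s 0 = 0 := by
  simp [levelAt_ite]

lemma levelAt_cons (d : ℕ) (k : ℤ) (s : Fin d → ℤ) (t : ℕ) :
    levelAt (d+1) (Fin.cons k s) (t+1) = k + levelAt d s t := by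
  simp [levelAt_ite, Fin.sum_univ_succ, Nat.succ_lt_succ_iff]

lemma pathWeight_cons (d : ℕ) (q : ℤ → ℝ) (k : ℤ) (s : Fin d → ℤ) :
    pathWeight (d+1) q (Fin.cons k s) = q k * pathWeight d q s := by
  simp [pathWeight, Fin.prod_univ_succ]

lemma sum_paths_zero (m : ℕ) (g : (Fin 0 → ℤ) → ℝ) :
    ∑ s ∈ paths 0 m, g s = g (fun i => i.elim0) := by
  have h : paths 0 m = {fun i => i.elim0} := by
    ext s
    simp only [paths, Fintype.mem_piFinset, Finset.mem_singleton]
    constructor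
    · intro _; funext i; exact i.elim0
    · intro _ i; exact i.elim0
  rw [h, Finset.sum_singleton]

lemma sum_paths_succ (d m : ℕ) (g : (Fin (d+1) → ℤ) → ℝ) :
    ∑ s ∈ paths (d+1) m, g s =
      ∑ k ∈ Finset.Icc (-(m:ℤ)) (m:ℤ), ∑ s ∈ paths d m, g (Fin.cons k s) := by
  rw [← Finset.sum_product']
  apply Finset.sum_nbij' (fun s => (s 0, Fin.tail s)) (fun x => Fin.cons x.1 x.2)
  · intro s hs
    simp only [paths, Fintype.mem_piFinset] at hs
    simp only [Finset.mem_product, paths, Fintype.mem_piFinset]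
    exact ⟨hs 0, fun i => hs i.succ⟩
  · intro x hx
    simp only [Finset.mem_product, paths, Fintype.mem_piFinset] at hx
    simp only [paths, Fintype.mem_piFinset]
    intro i
    refine Fin.cases ?_ ?_ i
    · simpa using hx.1
    · intro j; simpa using hx.2 j
  · intro s _; exact Fin.cons_self_tail s
  · intro x _; simp
  · intro s _; rw [Fin.cons_self_tail]

lemma binomP_succ_succ (p : ℝ) (d j : ℕ) (hj : j ≤ d) :
    binomP (d+1) p (j+1) = p * binomP d p j + (1-p) * binomP d p (j+1) := by
  rcases eq_or_lt_of_le hj with rfl | hj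
  · simp [binomP, Nat.choose_succ_self, Nat.sub_self, pow_succ]
    ring
  · simp only [binomP, Nat.choose_succ_succ, Nat.succ_sub_succ]
    have h1 : d - j = d - (j+1) + 1 := by omega
    rw [h1]
    push_cast
    ring

lemma binomP_self_succ (p : ℝ) (d : ℕ) : binomP d p (d+1) = 0 := by
  simp [binomP, Nat.choose_succ_self]

lemma binom_step (p : ℝ) (d : ℕ) (f : ℕ → ℝ) :
    ∑ j ∈ Finset.range (d+2), binomP (d+1) p j * f j =
      p * ∑ j ∈ Finset.range (d+1), binomP d p j * f (j+1) +
      (1-p) * ∑ j ∈ Finset.range (d+1), binomP d p j * f j := by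
  rw [Finset.sum_range_succ' (fun j => binomP (d+1) p j * f j) (d+1)]
  have key : ∀ j ∈ Finset.range (d+1),
      binomP (d+1) p (j+1) * f (j+1) =
        p * (binomP d p j * f (j+1)) + (1-p) * (binomP d p (j+1) * f (j+1)) := by
    intro j hj
    rw [binomP_succ_succ p d j (by simpa using Nat.lt_succ_iff.mp (Finset.mem_range.mp hj))]
    ring
  rw [Finset.sum_congr rfl key, Finset.sum_add_distrib, ← Finset.mul_sum, ← Finset.mul_sum]
  rw [Finset.sum_range_succ' (fun j => binomP d p j * f j) d]
  have h2 : ∑ j ∈ Finset.range (d+1), binomP d p (j+1) * f (j+1) =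
      ∑ j ∈ Finset.range d, binomP d p (j+1) * f (j+1) := by
    rw [Finset.sum_range_succ, binomP_self_succ]; ring
  rw [h2]
  have h3 : binomP (d+1) p 0 = (1-p) * binomP d p 0 := by
    simp [binomP, pow_succ]; ring
  rw [h3]
  ring

/-- The band predicate. -/
def bandP (kbar lbar : ℕ) (l : ℤ) : Prop :=
  -(lbar : ℤ) ≤ l ∧ l ≤ (kbar : ℤ)

/-- Discounted binomial expectation of the terminal payoff. -/
def payA (n : ℕ) (p dt S0 K σ h r : ℝ) (d j : ℕ) (l : ℤ) : ℝ :=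
  Real.exp (-(r * (d : ℝ) * dt)) *
    ∑ j' ∈ Finset.range (d+1), binomP d p j' * max (K - Sval S0 σ dt h (n : ℝ) (j + j') l) 0

lemma payA_succ (n : ℕ) (p dt S0 K σ h r : ℝ) (d j : ℕ) (l : ℤ) :
    payA n p dt S0 K σ h r (d+1) j l =
      Real.exp (-(r * dt)) *
        (payA n p dt S0 K σ h r d (j+1) l * p + payA n p dt S0 K σ h r d j l * (1-p)) := by
  unfold payA
  rw [show d + 1 + 1 = d + 2 from rfl,
    binom_step p d (fun x => max (K - Sval S0 σ dt h (n : ℝ) (j + x) l) 0)]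
  have hf : ∀ j' ∈ Finset.range (d+1),
      binomP d p j' * max (K - Sval S0 σ dt h (n : ℝ) (j + (j'+1)) l) 0 =
      binomP d p j' * max (K - Sval S0 σ dt h (n : ℝ) ((j+1) + j') l) 0 := by
    intro j' _
    have h : j + (j'+1) = (j+1) + j' := by omega
    rw [h]
  rw [Finset.sum_congr rfl hf]
  have hexp : Real.exp (-(r * ((d:ℝ)+1) * dt)) =
      Real.exp (-(r * dt)) * Real.exp (-(r * (d:ℝ) * dt)) := by
    rw [← Real.exp_add]; ring_nf
  push_cast
  rw [hexp]
  ring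

/-- Main (in-band) term in the path expansion. -/
def mainTerm (n m : ℕ) (q : ℤ → ℝ) (p dt S0 K σ h r : ℝ) (kbar lbar : ℕ)
    (d j : ℕ) (l : ℤ) : ℝ :=
  ∑ s ∈ (paths d m).filter (fun s => ∀ t ≤ d, bandP kbar lbar (l + levelAt d s t)),
    pathWeight d q s * payA n p dt S0 K σ h r d j (l + levelAt d s d)

/-- Exit term in the path expansion. -/
def exitTerm (m : ℕ) (q : ℤ → ℝ) (r dt : ℝ) (kbar lbar : ℕ) (b : ℝ)
    (d : ℕ) (l : ℤ) : ℝ :=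
  ∑ i ∈ Finset.Icc 1 d,
    ∑ y ∈ (paths i m).filter
        (fun y => (∀ t < i, bandP kbar lbar (l + levelAt i y t)) ∧
          ¬ bandP kbar lbar (l + levelAt i y i)),
      pathWeight i q y * (b * Real.exp (-(r * (i : ℝ) * dt)))

lemma forall_cons_band (kbar lbar : ℕ) {l : ℤ} (hl : bandP kbar lbar l)
    {d : ℕ} (k : ℤ) (s : Fin d → ℤ) (N : ℕ) :
    (∀ t < N + 1, bandP kbar lbar (l + levelAt (d+1) (Fin.cons k s) t)) ↔
      (∀ t < N, bandP kbar lbar (l + k + levelAt d s t)) := by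
  constructor
  · intro H t ht
    have := H (t+1) (by omega)
    rwa [levelAt_cons, ← add_assoc] at this
  · intro H t ht
    match t with
    | 0 => simpa [levelAt_zero] using hl
    | (u+1) =>
      have := H u (by omega)
      rw [levelAt_cons, ← add_assoc]
      exact this


lemma VEtr_notband (n m : ℕ) (q : ℤ → ℝ) (p dt S0 K σ h r b : ℝ) (kbar lbar : ℕ)
    {l : ℤ} (hl : ¬ bandP kbar lbar l) (d j : ℕ) :
    VEtr n m q p dt S0 K σ h r b kbar lbar d j l = b := by
  rw [bandP] at hl
  cases d <;> simp [VEtr, hl]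

lemma exitTerm_notband (m : ℕ) (q : ℤ → ℝ) (r dt : ℝ) (kbar lbar : ℕ) (b : ℝ)
    (d : ℕ) {l : ℤ} (hl : ¬ bandP kbar lbar l) :
    exitTerm m q r dt kbar lbar b d l = 0 := by
  apply Finset.sum_eq_zero
  intro i hi
  apply Finset.sum_eq_zero
  intro y hy
  exfalso
  obtain ⟨-, hcond⟩ := Finset.mem_filter.mp hy
  have h0 := hcond.1 0 (by have := (Finset.mem_Icc.mp hi).1; omega)
  rw [levelAt_zero, add_zero] at h0
  exact hl h0

lemma main_ind (n m : ℕ) (q : ℤ → ℝ) (p dt S0 K σ h r b : ℝ) (kbar lbar : ℕ) :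
    ∀ d j (l : ℤ), bandP kbar lbar l →
      VEtr n m q p dt S0 K σ h r b kbar lbar d j l =
        mainTerm n m q p dt S0 K σ h r kbar lbar d j l +
          exitTerm m q r dt kbar lbar b d l := by
  intro d
  induction d with
  | zero =>
    intro j l hl
    have hl' := hl
    rw [bandP] at hl'
    rw [mainTerm, exitTerm]
    simp only [Finset.Icc_self, Finset.Icc_eq_empty_of_lt (by omega : (0:ℕ) < 1)]
    rw [Finset.sum_filter]
    rw [sum_paths_zero]
    have hc : ∀ t ≤ 0, bandP kbar lbar (l + levelAt 0 (fun i => i.elim0) t) := by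
      intro t ht
      interval_cases t
      simpa [levelAt_zero] using hl
    rw [if_pos hc]
    simp [VEtr, hl', pathWeight, payA, binomP, levelAt_zero]
  | succ d IH =>
    intro j l hl
    have hl' := hl
    rw [bandP] at hl'
    rw [VEtr, if_pos hl']
    have step : ∀ k ∈ Finset.Icc (-(m:ℤ)) (m:ℤ),
        (VEtr n m q p dt S0 K σ h r b kbar lbar d (j+1) (l+k) * p +
          VEtr n m q p dt S0 K σ h r b kbar lbar d j (l+k) * (1-p)) * q k =
        ((if bandP kbar lbar (l+k) then
            mainTerm n m q p dt S0 K σ h r kbar lbar d (j+1) (l+k) * p +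
              mainTerm n m q p dt S0 K σ h r kbar lbar d j (l+k) * (1-p) else 0) +
          (if bandP kbar lbar (l+k) then exitTerm m q r dt kbar lbar b d (l+k) else b)) *
            q k := by
      intro k _
      by_cases hb : bandP kbar lbar (l+k)
      · rw [IH (j+1) _ hb, IH j _ hb, if_pos hb, if_pos hb]; ring
      · rw [VEtr_notband n m q p dt S0 K σ h r b kbar lbar hb,
          VEtr_notband n m q p dt S0 K σ h r b kbar lbar hb, if_neg hb, if_neg hb]; ring
    rw [Finset.sum_congr rfl step]
    simp only [add_mul, Finset.sum_add_distrib, mul_add]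
    have claimM : mainTerm n m q p dt S0 K σ h r kbar lbar (d+1) j l =
        Real.exp (-(r * dt)) *
          ∑ k ∈ Finset.Icc (-(m:ℤ)) (m:ℤ),
            (if bandP kbar lbar (l+k) then
              mainTerm n m q p dt S0 K σ h r kbar lbar d (j+1) (l+k) * p +
                mainTerm n m q p dt S0 K σ h r kbar lbar d j (l+k) * (1-p) else 0) * q k := by
      rw [mainTerm, Finset.sum_filter, sum_paths_succ, Finset.mul_sum]
      apply Finset.sum_congr rfl
      intro k _
      have hterm : ∀ s ∈ paths d m,
          (if (∀ t ≤ d+1, bandP kbar lbar (l + levelAt (d+1) (Fin.cons k s) t)) then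
            pathWeight (d+1) q (Fin.cons k s) *
              payA n p dt S0 K σ h r (d+1) j (l + levelAt (d+1) (Fin.cons k s) (d+1))
          else 0) =
          Real.exp (-(r * dt)) * (q k *
            (if (∀ t ≤ d, bandP kbar lbar (l + k + levelAt d s t)) then
              pathWeight d q s *
                (payA n p dt S0 K σ h r d (j+1) (l + k + levelAt d s d) * p +
                  payA n p dt S0 K σ h r d j (l + k + levelAt d s d) * (1-p))
            else 0)) := by
        intro s _
        have hcond : (∀ t ≤ d+1, bandP kbar lbar (l + levelAt (d+1) (Fin.cons k s) t)) ↔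
            (∀ t ≤ d, bandP kbar lbar (l + k + levelAt d s t)) := by
          simp only [← Nat.lt_succ_iff]
          exact forall_cons_band kbar lbar hl k s (d+1)
        rw [if_congr hcond rfl rfl, pathWeight_cons, levelAt_cons, ← add_assoc, payA_succ]
        by_cases hc : ∀ t ≤ d, bandP kbar lbar (l + k + levelAt d s t)
        · rw [if_pos hc, if_pos hc]; ring
        · rw [if_neg hc, if_neg hc]; ring
      rw [Finset.sum_congr rfl hterm, ← Finset.mul_sum, ← Finset.mul_sum]
      congr 1
      by_cases hb : bandP kbar lbar (l+k)
      · rw [if_pos hb, mul_comm]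
        congr 1
        rw [mainTerm, mainTerm, Finset.sum_filter, Finset.sum_filter,
          Finset.sum_mul, Finset.sum_mul, ← Finset.sum_add_distrib]
        apply Finset.sum_congr rfl
        intro s _
        by_cases hc : ∀ t ≤ d, bandP kbar lbar (l + k + levelAt d s t)
        · rw [if_pos hc, if_pos hc, if_pos hc]; ring
        · rw [if_neg hc, if_neg hc, if_neg hc]; ring
      · rw [if_neg hb]
        have hz : (∑ s ∈ paths d m,
            (if (∀ t ≤ d, bandP kbar lbar (l + k + levelAt d s t)) then
              pathWeight d q s *
                (payA n p dt S0 K σ h r d (j+1) (l + k + levelAt d s d) * p +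
                  payA n p dt S0 K σ h r d j (l + k + levelAt d s d) * (1-p))
            else 0)) = 0 := by
          apply Finset.sum_eq_zero
          intro s _
          rw [if_neg]
          intro hc
          have := hc 0 (by omega)
          rw [levelAt_zero, add_zero] at this
          exact hb this
        rw [hz]
        ring
    have claimE : exitTerm m q r dt kbar lbar b (d+1) l =
        Real.exp (-(r * dt)) *
          ∑ k ∈ Finset.Icc (-(m:ℤ)) (m:ℤ),
            (if bandP kbar lbar (l+k) then exitTerm m q r dt kbar lbar b d (l+k) else b) *
              q k := by
      rw [exitTerm, sum_Icc_one, Finset.sum_range_succ']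
      have hshift : ∀ i : ℕ,
          (∑ y ∈ (paths (i+1+1) m).filter
              (fun y => (∀ t < i+1+1, bandP kbar lbar (l + levelAt (i+1+1) y t)) ∧
                ¬ bandP kbar lbar (l + levelAt (i+1+1) y (i+1+1))),
            pathWeight (i+1+1) q y * (b * Real.exp (-(r * ((i+1+1 : ℕ) : ℝ) * dt)))) =
          ∑ k ∈ Finset.Icc (-(m:ℤ)) (m:ℤ), Real.exp (-(r*dt)) * (q k *
            ∑ y ∈ (paths (i+1) m).filter
              (fun y => (∀ t < i+1, bandP kbar lbar (l + k + levelAt (i+1) y t)) ∧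
                ¬ bandP kbar lbar (l + k + levelAt (i+1) y (i+1))),
              pathWeight (i+1) q y * (b * Real.exp (-(r * ((i+1 : ℕ) : ℝ) * dt)))) := by
        intro i
        rw [Finset.sum_filter, sum_paths_succ]
        apply Finset.sum_congr rfl
        intro k _
        rw [Finset.sum_filter, Finset.mul_sum, Finset.mul_sum]
        apply Finset.sum_congr rfl
        intro y _
        have h2 : l + levelAt (i+1+1) (Fin.cons k y) (i+1+1) =
            l + k + levelAt (i+1) y (i+1) := by rw [levelAt_cons, ← add_assoc]
        have hcond : ((∀ t < i+1+1, bandP kbar lbar (l + levelAt (i+1+1) (Fin.cons k y) t)) ∧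
              ¬ bandP kbar lbar (l + levelAt (i+1+1) (Fin.cons k y) (i+1+1))) ↔
            ((∀ t < i+1, bandP kbar lbar (l + k + levelAt (i+1) y t)) ∧
              ¬ bandP kbar lbar (l + k + levelAt (i+1) y (i+1))) :=
          and_congr (forall_cons_band kbar lbar hl k y (i+1)) (by rw [h2])
        rw [if_congr hcond rfl rfl, pathWeight_cons]
        have hexp : Real.exp (-(r * ((i+1+1 : ℕ) : ℝ) * dt)) =
            Real.exp (-(r*dt)) * Real.exp (-(r * ((i+1 : ℕ) : ℝ) * dt)) := by
          push_cast; rw [← Real.exp_add]; ring_nf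
        rw [hexp]
        by_cases hc : (∀ t < i+1, bandP kbar lbar (l + k + levelAt (i+1) y t)) ∧
            ¬ bandP kbar lbar (l + k + levelAt (i+1) y (i+1))
        · rw [if_pos hc, if_pos hc]; ring
        · rw [if_neg hc, if_neg hc]; ring
      rw [Finset.sum_congr rfl (fun i _ => hshift i), Finset.sum_comm]
      have hF1 : (∑ y ∈ (paths (0+1) m).filter
            (fun y => (∀ t < 0+1, bandP kbar lbar (l + levelAt (0+1) y t)) ∧
              ¬ bandP kbar lbar (l + levelAt (0+1) y (0+1))),
          pathWeight (0+1) q y * (b * Real.exp (-(r * ((0+1 : ℕ) : ℝ) * dt)))) =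
          ∑ k ∈ Finset.Icc (-(m:ℤ)) (m:ℤ),
            (if bandP kbar lbar (l+k) then 0 else
              q k * (b * Real.exp (-(r * dt)))) := by
        rw [Finset.sum_filter, sum_paths_succ]
        apply Finset.sum_congr rfl
        intro k _
        rw [sum_paths_zero]
        have hcond : ((∀ t < 0+1, bandP kbar lbar
              (l + levelAt (0+1) (Fin.cons k (fun i => i.elim0)) t)) ∧
            ¬ bandP kbar lbar (l + levelAt (0+1) (Fin.cons k (fun i => i.elim0)) (0+1))) ↔
            ¬ bandP kbar lbar (l+k) := by
          rw [and_congr (forall_cons_band kbar lbar hl k _ 0)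
            (by rw [levelAt_cons, ← add_assoc] :
              ¬ bandP kbar lbar (l + levelAt (0+1) (Fin.cons k (fun i => i.elim0)) (0+1)) ↔
              ¬ bandP kbar lbar (l + k + levelAt 0 (fun i => i.elim0) 0))]
          simp [levelAt_zero]
        rw [if_congr hcond rfl rfl, pathWeight_cons]
        have hpw : pathWeight 0 q (fun i => i.elim0) = 1 := by simp [pathWeight]
        have hone : ((0+1 : ℕ) : ℝ) = 1 := by norm_num
        rw [hpw, hone]
        by_cases hb : bandP kbar lbar (l+k)
        · rw [if_neg (not_not_intro hb), if_pos hb]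
        · rw [if_pos hb, if_neg hb]; ring_nf
      rw [hF1, Finset.mul_sum, ← Finset.sum_add_distrib]
      apply Finset.sum_congr rfl
      intro k _
      have hE : (∑ i ∈ Finset.range d,
          ∑ y ∈ (paths (i+1) m).filter
            (fun y => (∀ t < i+1, bandP kbar lbar (l + k + levelAt (i+1) y t)) ∧
              ¬ bandP kbar lbar (l + k + levelAt (i+1) y (i+1))),
            pathWeight (i+1) q y * (b * Real.exp (-(r * ((i+1 : ℕ) : ℝ) * dt)))) =
          exitTerm m q r dt kbar lbar b d (l+k) := by
        rw [exitTerm, sum_Icc_one]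
      rw [← Finset.mul_sum, ← Finset.mul_sum, hE]
      by_cases hb : bandP kbar lbar (l+k)
      · rw [if_pos hb, if_pos hb]; ring
      · rw [if_neg hb, if_neg hb, exitTerm_notband m q r dt kbar lbar b d hb]; ring
    rw [claimM, claimE]

end HSAux

/-- Lemma: for every `b ≥ 0`, the truncated backward European put price with boundary value
`b` satisfies `V_E^b(0,0,0) = V̂^b = V^{TT} +` (sum over first-exit prefixes of the prefix
probability times `b e^{−r i Δt}`). -/
theorem VE_b_eq_Vhat (n m : ℕ) (hn : 1 ≤ n) (hm : 1 ≤ m) (q : ℤ → ℝ)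
    (hq : ∀ l : ℤ, -(m : ℤ) ≤ l → l ≤ (m : ℤ) → 0 ≤ q l)
    (hsum : ∑ l ∈ Finset.Icc (-(m : ℤ)) (m : ℤ), q l = 1)
    (S0 K σ τ h r p : ℝ) (hS0 : 0 < S0) (hK : 0 < K) (hh : 0 < h) (hτ : 0 < τ)
    (hp0 : 0 ≤ p) (hp1 : p ≤ 1) (kbar lbar : ℕ) :
    ∀ b : ℝ, 0 ≤ b →
      VEtr n m q p (τ / n) S0 K σ h r b kbar lbar n 0 0 =
        VTT n m q p S0 K σ τ h r kbar lbar + exitSum n m q r (τ / n) kbar lbar b := by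
  intro b _
  have hband0 : HSAux.bandP kbar lbar 0 := by
    constructor <;> simp
  rw [HSAux.main_ind n m q p (τ/n) S0 K σ h r b kbar lbar n 0 0 hband0]
  congr 1
  · -- mainTerm = VTT
    rw [HSAux.mainTerm]
    have hmap : ∀ s ∈ (paths n m).filter
        (fun s => ∀ t ≤ n, HSAux.bandP kbar lbar (0 + levelAt n s t)),
        levelAt n s n ∈ Finset.Icc (-(lbar:ℤ)) (kbar:ℤ) := by
      intro s hs
      have := (Finset.mem_filter.mp hs).2 n le_rfl
      rw [zero_add] at this
      exact Finset.mem_Icc.mpr this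
    rw [← Finset.sum_fiberwise_of_maps_to hmap
      (fun s => pathWeight n q s * HSAux.payA n p (τ/n) S0 K σ h r n 0 (0 + levelAt n s n))]
    rw [VTT, Finset.mul_sum]
    apply Finset.sum_congr rfl
    intro k _
    have hset : Finset.filter (fun s => levelAt n s n = k)
        ((paths n m).filter (fun s => ∀ t ≤ n, HSAux.bandP kbar lbar (0 + levelAt n s t))) =
        (paths n m).filter (fun s => levelAt n s n = k ∧
          ∀ t ≤ n, -(lbar:ℤ) ≤ levelAt n s t ∧ levelAt n s t ≤ (kbar:ℤ)) := by
      rw [Finset.filter_filter]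
      apply Finset.filter_congr
      intro s _
      simp only [HSAux.bandP, zero_add]
      exact and_comm
    rw [hset]
    have hinner : (∑ s ∈ (paths n m).filter (fun s => levelAt n s n = k ∧
          ∀ t ≤ n, -(lbar:ℤ) ≤ levelAt n s t ∧ levelAt n s t ≤ (kbar:ℤ)),
        pathWeight n q s * HSAux.payA n p (τ/n) S0 K σ h r n 0 (0 + levelAt n s n)) =
        qcut n m q kbar lbar k * HSAux.payA n p (τ/n) S0 K σ h r n 0 (0 + k) := by
      rw [qcut, Finset.sum_mul]
      apply Finset.sum_congr rfl
      intro s hs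
      rw [(Finset.mem_filter.mp hs).2.1]
    rw [hinner]
    have hn0 : (n:ℝ) ≠ 0 := by positivity
    have hC : HSAux.payA n p (τ/n) S0 K σ h r n 0 (0 + k) =
        Real.exp (-(r*τ)) *
          ∑ j ∈ Finset.range (n+1), putPayoff n S0 K σ (τ/n) h j k * binomP n p j := by
      rw [HSAux.payA]
      have e1 : -(r * (n:ℝ) * (τ/n)) = -(r*τ) := by field_simp
      rw [e1]
      congr 1
      apply Finset.sum_congr rfl
      intro j _
      rw [mul_comm (putPayoff n S0 K σ (τ/n) h j k)]
      congr 1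
      rw [putPayoff, Sval]
      have e2 : (2 * ((0 + j : ℕ) : ℝ) - (n:ℝ)) * (σ * Real.sqrt (τ/n)) +
          ((0 + k : ℤ) : ℝ) * h =
          (2 * (j:ℝ) - (n:ℝ)) * (σ * Real.sqrt (τ/n)) + h * ((k:ℤ):ℝ) := by
        push_cast
        ring
      rw [e2]
    rw [hC, ← Finset.sum_mul]
    ring
  · -- exitTerm = exitSum
    rw [HSAux.exitTerm, exitSum]
    apply Finset.sum_congr rfl
    intro i _
    apply Finset.sum_congr _ (fun y _ => rfl)
    apply Finset.filter_congr
    intro y _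
    simp [HSAux.bandP, zero_add]
end
end
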